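/- The reduction map Π : {1,...,2^{n+1}} → {1,...,2^n} given by reduction modulo 2^n is a homomorphism from the Laver table of order 2^{n+1} to the Laver table of order 2^n: Π(p ⋆_{n+1} q) = Π(p) ⋆ₙ Π(q). -/
import Mathlib


def LaverAxioms (N : ℕ) (star : ℕ → ℕ → ℕ) : Prop :=
  (∀ p q, p ∈ Set.Icc 1 N → q ∈ Set.Icc 1 N → star p q ∈ Set.Icc 1 N) ∧
  (∀ p ∈ Set.Icc 1 N, star p 1 = p % N + 1) ∧
  (∀ p q, p ∈ Set.Icc 1 N → q ∈ Set.Icc 1 N →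
    star p (star q 1) = star (star p q) (star p 1))

/-- The top row of a Laver table is the identity: star N q = q. -/
lemma laver_top {N : ℕ} {star : ℕ → ℕ → ℕ} (hN : 0 < N) (h : LaverAxioms N star) :
    ∀ q, 1 ≤ q → q ≤ N → star N q = q := by
  obtain ⟨hcl, h1, h3⟩ := h
  have hNmem : N ∈ Set.Icc 1 N := by simp [Set.mem_Icc]; omega
  have hN1 : star N 1 = 1 := by rw [h1 N hNmem, Nat.mod_self]
  intro q
  induction q with
  | zero => omega
  | succ m ih =>
    intro _ hle
    rcases Nat.eq_zero_or_pos m with hm | hm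
    · subst hm; simpa using hN1
    · have hmN : m < N := by omega
      have hmmem : m ∈ Set.Icc 1 N := by simp [Set.mem_Icc]; omega
      have hstep : star m 1 = m + 1 := by rw [h1 m hmmem, Nat.mod_eq_of_lt hmN]
      have key := h3 N m hNmem hmmem
      rw [hstep, hN1, ih hm (le_of_lt hmN)] at key
      rw [key]; exact hstep

/-- Rows below the top are strictly increasing beyond the index: p < star p q. -/
lemma laver_row_gt {N : ℕ} {star : ℕ → ℕ → ℕ} (hN : 0 < N) (h : LaverAxioms N star) :
    ∀ d p, N - p = d → 1 ≤ p → p < N → ∀ q, 1 ≤ q → q ≤ N → p < star p q := by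
  obtain ⟨hcl, h1, h3⟩ := h
  intro d
  induction d using Nat.strong_induction_on with
  | _ d ihd =>
    intro p hd hp1 hpN q
    induction q with
    | zero => omega
    | succ m ihq =>
      intro _ hqN
      have hpmem : p ∈ Set.Icc 1 N := by simp [Set.mem_Icc]; omega
      have hp1' : star p 1 = p + 1 := by rw [h1 p hpmem, Nat.mod_eq_of_lt hpN]
      rcases Nat.eq_zero_or_pos m with hm | hm
      · subst hm
        simp only [Nat.zero_add]
        rw [hp1']; omega
      · have hmmem : m ∈ Set.Icc 1 N := by simp [Set.mem_Icc]; omega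
        have hm1 : star m 1 = m + 1 := by rw [h1 m hmmem, Nat.mod_eq_of_lt (by omega)]
        have hr : p < star p m := ihq hm (by omega)
        have hrmem := hcl p m hpmem hmmem
        simp only [Set.mem_Icc] at hrmem
        have key := h3 p m hpmem hmmem
        rw [hm1, hp1'] at key
        rw [key]
        rcases eq_or_lt_of_le hrmem.2 with he | hlt
        · rw [he, laver_top hN ⟨hcl, h1, h3⟩ (p+1) (by omega) (by omega)]
          omega
        · have := ihd (N - star p m) (by omega) (star p m) rfl (by omega) hlt
            (p+1) (by omega) (by omega)
          omega

lemma mod_red {N x : ℕ} (hN : 0 < N) (hx1 : 1 ≤ x) (hx2 : x ≤ 2*N) :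
    x % (2*N) % N = ((x-1) % N + 1) % N := by
  by_cases hx : x = 2*N
  · subst hx
    rw [Nat.mod_self, Nat.zero_mod, (by omega : 2*N - 1 = N + (N-1)), Nat.add_mod_left,
        Nat.mod_eq_of_lt (by omega : N - 1 < N), (by omega : N - 1 + 1 = N), Nat.mod_self]
  · have hxlt : x < 2*N := by omega
    rw [Nat.mod_eq_of_lt hxlt]
    rcases lt_trichotomy x N with h | h | h
    · rw [Nat.mod_eq_of_lt h, Nat.mod_eq_of_lt (by omega : x - 1 < N),
          (by omega : x - 1 + 1 = x), Nat.mod_eq_of_lt h]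
    · subst h
      rw [Nat.mod_self, Nat.mod_eq_of_lt (by omega : x - 1 < x),
          (by omega : x - 1 + 1 = x), Nat.mod_self]
    · have e1 : x % N = x - N := by
        rw [Nat.mod_eq_sub_mod (by omega), Nat.mod_eq_of_lt (by omega)]
      have e2 : (x-1) % N = x - 1 - N := by
        rw [Nat.mod_eq_sub_mod (by omega), Nat.mod_eq_of_lt (by omega)]
      rw [e1, e2, (by omega : x - 1 - N + 1 = x - N), Nat.mod_eq_of_lt (by omega)]

/-- reduction modulo 2^n, Π(p) = (p-1) % 2^n + 1, is a homomorphism from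
the Laver table of order 2^{n+1} to the Laver table of order 2^n. -/
theorem laver_reduction_hom (n : ℕ) (starBig starSmall : ℕ → ℕ → ℕ)
    (hB : LaverAxioms (2 ^ (n + 1)) starBig) (hS : LaverAxioms (2 ^ n) starSmall) :
    ∀ p ∈ Set.Icc 1 (2 ^ (n + 1)), ∀ q ∈ Set.Icc 1 (2 ^ (n + 1)),
      (starBig p q - 1) % 2 ^ n + 1 =
        starSmall ((p - 1) % 2 ^ n + 1) ((q - 1) % 2 ^ n + 1) := by
  have hN : 0 < 2^n := pow_pos (by norm_num) n
  have hM : 2^(n+1) = 2 * 2^n := by rw [pow_succ]; ring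
  have hMpos : 0 < 2^(n+1) := by omega
  obtain ⟨Bcl, B1, B3⟩ := hB
  obtain ⟨Scl, S1, S3⟩ := hS
  have Btop := laver_top hMpos ⟨Bcl, B1, B3⟩
  have Stop := laver_top hN ⟨Scl, S1, S3⟩
  have Brow := laver_row_gt hMpos ⟨Bcl, B1, B3⟩
  have hPi : ∀ x : ℕ, 1 ≤ (x-1) % 2^n + 1 ∧ (x-1) % 2^n + 1 ≤ 2^n := by
    intro x
    have := Nat.mod_lt (x-1) hN
    omega
  have hPimem : ∀ x : ℕ, (x-1) % 2^n + 1 ∈ Set.Icc 1 (2^n) := by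
    intro x
    simp only [Set.mem_Icc]
    exact hPi x
  have main : ∀ d p, 2^(n+1) - p = d → 1 ≤ p → p ≤ 2^(n+1) → ∀ q, 1 ≤ q → q ≤ 2^(n+1) →
      (starBig p q - 1) % 2^n + 1 = starSmall ((p-1) % 2^n + 1) ((q-1) % 2^n + 1) := by
    intro d
    induction d using Nat.strong_induction_on with
    | _ d ihd =>
      intro p hd hp1 hpM q
      by_cases hpeq : p = 2^(n+1)
      · intro hq1 hqM
        subst hpeq
        rw [Btop q hq1 hqM]
        have hPiM : (2^(n+1) - 1) % 2^n + 1 = 2^n := by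
          rw [hM, (by omega : 2*2^n - 1 = 2^n + (2^n - 1)), Nat.add_mod_left,
              Nat.mod_eq_of_lt (by omega)]
          omega
        rw [hPiM, Stop _ (hPi q).1 (hPi q).2]
      · have hpM' : p < 2^(n+1) := by omega
        have hpmem : p ∈ Set.Icc 1 (2^(n+1)) := by simp [Set.mem_Icc]; omega
        have hp1' : starBig p 1 = p + 1 := by rw [B1 p hpmem, Nat.mod_eq_of_lt hpM']
        have hmodp : p % 2^n = ((p-1) % 2^n + 1) % 2^n := by
          have h := mod_red (x := p) hN hp1 (by omega)
          rwa [Nat.mod_eq_of_lt (by omega : p < 2*2^n)] at h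
        induction q with
        | zero => omega
        | succ m ihq =>
          intro _ hqM
          rcases Nat.eq_zero_or_pos m with hm | hm
          · subst hm
            simp only [Nat.zero_add]
            rw [hp1']
            have e1 : ((1:ℕ) - 1) % 2^n + 1 = 1 := by simp
            rw [e1, S1 _ (hPimem p)]
            simp only [Nat.add_sub_cancel]
            omega
          · have hmM : m < 2^(n+1) := by omega
            have hmmem : m ∈ Set.Icc 1 (2^(n+1)) := by simp [Set.mem_Icc]; omega
            have hm1 : starBig m 1 = m + 1 := by rw [B1 m hmmem, Nat.mod_eq_of_lt hmM]
            have hrmem := Bcl p m hpmem hmmem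
            simp only [Set.mem_Icc] at hrmem
            have hrgt : p < starBig p m := Brow (2^(n+1) - p) p rfl hp1 hpM' m hm (by omega)
            have key := B3 p m hpmem hmmem
            rw [hm1, hp1'] at key
            rw [key]
            have outer := ihd (2^(n+1) - starBig p m) (by omega) (starBig p m) rfl
              (by omega) hrmem.2 (p+1) (by omega) (by omega)
            rw [outer]
            have inner := ihq hm (by omega)
            have hmodm : m % 2^n = ((m-1) % 2^n + 1) % 2^n := by
              have h := mod_red (x := m) hN hm (by omega)
              rwa [Nat.mod_eq_of_lt (by omega : m < 2*2^n)] at h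
            have hPp1 : ((p+1) - 1) % 2^n + 1 = starSmall ((p-1) % 2^n + 1) 1 := by
              rw [S1 _ (hPimem p)]
              simp only [Nat.add_sub_cancel]
              omega
            have hPm1 : ((m+1) - 1) % 2^n + 1 = starSmall ((m-1) % 2^n + 1) 1 := by
              rw [S1 _ (hPimem m)]
              simp only [Nat.add_sub_cancel]
              omega
            rw [inner, hPp1, hPm1]
            exact (S3 _ _ (hPimem p) (hPimem m)).symm
  intro p hp q hq
  simp only [Set.mem_Icc] at hp hq
  exact main (2^(n+1) - p) p rfl hp.1 hp.2 q hq.1 hq.2
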